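/- Let K ⊆ ℝ² be a convex body of constant width 1 with support function h, and let γ(θ) = h(θ) u(θ) + h'(θ) u'(θ). Then γ is 1-Lipschitz: |γ(θ₁) − γ(θ₂)| ≤ |θ₁ − θ₂| for all θ₁, θ₂ ∈ ℝ. -/

import Mathlib

open Real

/-- The direction vector `u θ = (cos θ, sin θ)` in the Euclidean plane. -/
noncomputable def u (θ : ℝ) : EuclideanSpace ℝ (Fin 2) := !₂[Real.cos θ, Real.sin θ]

/-- The rotated vector `u' θ = (−sin θ, cos θ)`, the derivative of `u`. -/
noncomputable def u' (θ : ℝ) : EuclideanSpace ℝ (Fin 2) := !₂[-Real.sin θ, Real.cos θ]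

/-- `h` is the support function of `K`: for every direction `θ`,
`h θ` is the maximum of `x · u θ` over `x ∈ K`. -/
def IsSupportFn (K : Set (EuclideanSpace ℝ (Fin 2))) (h : ℝ → ℝ) : Prop :=
  ∀ θ : ℝ, IsGreatest ((fun x => (inner ℝ x (u θ) : ℝ)) '' K) (h θ)

lemma inner_u (x : EuclideanSpace ℝ (Fin 2)) (θ : ℝ) :
    (inner ℝ x (u θ) : ℝ) = x 0 * Real.cos θ + x 1 * Real.sin θ := by
  simp [u, PiLp.inner_apply, Fin.sum_univ_two, mul_comm]

lemma inner_u' (x : EuclideanSpace ℝ (Fin 2)) (θ : ℝ) :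
    (inner ℝ x (u' θ) : ℝ) = x 0 * (-Real.sin θ) + x 1 * Real.cos θ := by
  simp [u', PiLp.inner_apply, Fin.sum_univ_two, mul_comm]

lemma u_add_pi (θ : ℝ) : u (θ + π) = -u θ := by
  ext i
  fin_cases i <;> simp [u, Real.cos_add_pi, Real.sin_add_pi]

lemma norm_u (θ : ℝ) : ‖u θ‖ = 1 := by
  have : ‖u θ‖ = Real.sqrt (Real.cos θ ^ 2 + Real.sin θ ^ 2) := by
    rw [EuclideanSpace.norm_eq]
    simp [u, Fin.sum_univ_two, sq_abs]
  rw [this]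
  rw [show Real.cos θ ^ 2 + Real.sin θ ^ 2 = 1 by
    have := Real.sin_sq_add_cos_sq θ; linarith]
  exact Real.sqrt_one

lemma norm_u_sub_le (a b : ℝ) : ‖u a - u b‖ ≤ |a - b| := by
  have hsq : ‖u a - u b‖ ^ 2 = 2 - 2 * Real.cos (a - b) := by
    rw [EuclideanSpace.norm_eq]
    rw [Real.sq_sqrt (by positivity)]
    simp only [PiLp.sub_apply]
    have h0 : (u a - u b : EuclideanSpace ℝ (Fin 2)) 0 = Real.cos a - Real.cos b := by
      simp [u]
    have h1 : (u a - u b : EuclideanSpace ℝ (Fin 2)) 1 = Real.sin a - Real.sin b := by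
      simp [u]
    rw [Fin.sum_univ_two]
    simp only [Real.norm_eq_abs, sq_abs]
    rw [Real.cos_sub]
    have hca := Real.sin_sq_add_cos_sq a
    have hcb := Real.sin_sq_add_cos_sq b
    simp [u]
    ring_nf
    nlinarith [hca, hcb]
  have hcos : 2 - 2 * Real.cos (a - b) ≤ (a - b) ^ 2 := by
    have h2 : Real.cos (a - b) = 1 - 2 * Real.sin ((a - b) / 2) ^ 2 := by
      have := Real.cos_two_mul' ((a - b) / 2)
      have hs := Real.sin_sq_add_cos_sq ((a - b) / 2)
      rw [show 2 * ((a - b) / 2) = a - b by ring] at this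
      linarith
    have h3 : |Real.sin ((a - b) / 2)| ≤ |(a - b) / 2| := Real.abs_sin_le_abs
    have h4 : Real.sin ((a - b) / 2) ^ 2 ≤ ((a - b) / 2) ^ 2 := by
      rw [← sq_abs, ← sq_abs ((a-b)/2)]
      exact pow_le_pow_left₀ (abs_nonneg _) h3 2
    nlinarith
  have h5 : ‖u a - u b‖ ^ 2 ≤ |a - b| ^ 2 := by rw [hsq, sq_abs]; exact hcos
  nlinarith [norm_nonneg (u a - u b), abs_nonneg (a - b)]

/-- For a convex body `K` of constant width 1 with support function `h`, the boundary
parametrization `γ(θ) = h(θ) u(θ) + h'(θ) u'(θ)` is 1-Lipschitz: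
`‖γ(θ₁) − γ(θ₂)‖ ≤ |θ₁ − θ₂|`. -/
theorem constant_width_parametrization_lipschitz
    (K : Set (EuclideanSpace ℝ (Fin 2))) (h : ℝ → ℝ)
    (hne : K.Nonempty) (hcomp : IsCompact K) (hconv : Convex ℝ K)
    (hsupp : IsSupportFn K h)
    (hwidth : ∀ θ : ℝ, h θ + h (θ + π) = 1) :
    ∀ θ₁ θ₂ : ℝ, ‖(h θ₁ • u θ₁ + deriv h θ₁ • u' θ₁) - (h θ₂ • u θ₂ + deriv h θ₂ • u' θ₂)‖
      ≤ |θ₁ - θ₂| := by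
  -- choose support points
  have hex : ∀ θ : ℝ, ∃ x, x ∈ K ∧ (inner ℝ x (u θ) : ℝ) = h θ := by
    intro θ
    obtain ⟨x, hxK, hx⟩ := (hsupp θ).1
    exact ⟨x, hxK, hx⟩
  choose x hxK hxval using hex
  have hub : ∀ θ : ℝ, ∀ y ∈ K, (inner ℝ y (u θ) : ℝ) ≤ h θ :=
    fun θ y hy => (hsupp θ).2 ⟨y, hy, rfl⟩
  -- the diameter of K is at most 1
  have hdiam : ∀ p ∈ K, ∀ q ∈ K, ‖p - q‖ ≤ 1 := by
    intro p hp q hq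
    rcases eq_or_ne p q with rfl | hpq
    · simp
    · set v := p - q with hv_def
      have hv : v ≠ 0 := sub_ne_zero.mpr hpq
      set z : ℂ := ⟨v 0, v 1⟩ with hz_def
      have habs : ‖z‖ = ‖v‖ := by
        rw [EuclideanSpace.norm_eq, Complex.norm_def, Complex.normSq_apply]
        congr 1
        simp [hz_def, Fin.sum_univ_two, sq_abs, sq]
      have hz : z ≠ 0 := by
        intro hz0
        apply hv
        have h0 : v 0 = 0 := by
          have := congrArg Complex.re hz0; simpa [hz_def] using this
        have h1 : v 1 = 0 := by
          have := congrArg Complex.im hz0; simpa [hz_def] using this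
        ext i; fin_cases i <;> simp [h0, h1]
      set θ := Complex.arg z with hθ_def
      have hvpos : (0:ℝ) < ‖v‖ := norm_pos_iff.mpr hv
      have hcos : Real.cos θ = v 0 / ‖v‖ := by
        rw [hθ_def, Complex.cos_arg hz, habs]
      have hsin : Real.sin θ = v 1 / ‖v‖ := by
        rw [hθ_def, Complex.sin_arg, habs]
      have hnv : v 0 * v 0 + v 1 * v 1 = ‖v‖ ^ 2 := by
        rw [EuclideanSpace.norm_eq, Real.sq_sqrt (by positivity)]
        simp [Fin.sum_univ_two, sq_abs, sq]
      have hinner : (inner ℝ v (u θ) : ℝ) = ‖v‖ := by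
        rw [inner_u, hcos, hsin]
        field_simp
        nlinarith [hnv]
      have h1 : (inner ℝ p (u θ) : ℝ) ≤ h θ := hub θ p hp
      have h2 : (inner ℝ q (u (θ + π)) : ℝ) ≤ h (θ + π) := hub (θ + π) q hq
      have h3 : (inner ℝ q (u (θ + π)) : ℝ) = -(inner ℝ q (u θ) : ℝ) := by
        rw [u_add_pi, inner_neg_right]
      have h4 : (inner ℝ v (u θ) : ℝ) = inner ℝ p (u θ) - inner ℝ q (u θ) := by
        rw [hv_def, inner_sub_left]
      have := hwidth θ
      linarith [hinner ▸ h4]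
  -- structure: any maximizer at θ equals (maximizer at θ+π) + u θ
  have hkey : ∀ θ : ℝ, ∀ p ∈ K, (inner ℝ p (u θ) : ℝ) = h θ → p - u θ = x (θ + π) := by
    intro θ p hp hpval
    have hz1 : (inner ℝ (x (θ + π)) (u θ) : ℝ) = -h (θ + π) := by
      have := hxval (θ + π)
      rw [u_add_pi, inner_neg_right] at this
      linarith
    have hinner : (inner ℝ (p - x (θ + π)) (u θ) : ℝ) = 1 := by
      rw [inner_sub_left, hpval, hz1]
      linarith [hwidth θ]
    have hle : ‖p - x (θ + π)‖ ≤ 1 := hdiam p hp _ (hxK _)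
    have hzero : ‖p - x (θ + π) - u θ‖ ^ 2 ≤ 0 := by
      rw [norm_sub_sq_real, hinner, norm_u]
      nlinarith [norm_nonneg (p - x (θ + π))]
    have : p - x (θ + π) - u θ = 0 := by
      rw [← norm_eq_zero]
      nlinarith [norm_nonneg (p - x (θ + π) - u θ), sq_nonneg ‖p - x (θ + π) - u θ‖]
    rw [sub_eq_iff_eq_add.mp (sub_eq_zero.mp this)]
    abel
  have hmemK : ∀ θ : ℝ, x θ - u θ ∈ K := by
    intro θ
    rw [hkey θ (x θ) (hxK θ) (hxval θ)]
    exact hxK (θ + π)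
  -- chord bound: ‖x a − x b‖ ≤ ‖u a − u b‖
  have hchord : ∀ a b : ℝ, ‖x a - x b‖ ≤ ‖u a - u b‖ := by
    have half : ∀ a b : ℝ, ‖x a - x b‖ ^ 2 ≤ 2 * (inner ℝ (x a - x b) (u a) : ℝ) := by
      intro a b
      have hle : ‖x b - (x a - u a)‖ ≤ 1 := hdiam _ (hxK b) _ (hmemK a)
      have he : x b - (x a - u a) = x b - x a + u a := by abel
      rw [he] at hle
      have hsq : ‖x b - x a + u a‖ ^ 2 ≤ 1 := by nlinarith [norm_nonneg (x b - x a + u a)]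
      rw [norm_add_sq_real, norm_u] at hsq
      have h1 : (inner ℝ (x b - x a) (u a) : ℝ) = -(inner ℝ (x a - x b) (u a) : ℝ) := by
        rw [show x b - x a = -(x a - x b) by abel, inner_neg_left]
      have h2 : ‖x b - x a‖ = ‖x a - x b‖ := norm_sub_rev _ _
      rw [h1, h2] at hsq
      nlinarith [norm_nonneg (x a - x b)]
    intro a b
    have h1 := half a b
    have h2 := half b a
    have h3 : ‖x b - x a‖ = ‖x a - x b‖ := norm_sub_rev _ _
    rw [h3] at h2
    have h4 : (inner ℝ (x b - x a) (u b) : ℝ) = -(inner ℝ (x a - x b) (u b) : ℝ) := by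
      rw [show x b - x a = -(x a - x b) by abel, inner_neg_left]
    rw [h4] at h2
    have h5 : ‖x a - x b‖ ^ 2 ≤ (inner ℝ (x a - x b) (u a - u b) : ℝ) := by
      rw [inner_sub_right]
      linarith
    have h6 : (inner ℝ (x a - x b) (u a - u b) : ℝ) ≤ ‖x a - x b‖ * ‖u a - u b‖ :=
      real_inner_le_norm _ _
    nlinarith [norm_nonneg (x a - x b), norm_nonneg (u a - u b)]
  -- h is differentiable with deriv h θ = ⟪x θ, u' θ⟫
  have hderiv : ∀ θ : ℝ, HasDerivAt h ((inner ℝ (x θ) (u' θ) : ℝ)) θ := by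
    intro θ
    have hg : HasDerivAt (fun φ => (inner ℝ (x θ) (u φ) : ℝ)) ((inner ℝ (x θ) (u' θ) : ℝ)) θ := by
      simp only [inner_u, inner_u']
      exact ((Real.hasDerivAt_cos θ).const_mul (x θ 0)).add
        ((Real.hasDerivAt_sin θ).const_mul (x θ 1))
    have hsmall : HasDerivAt (fun φ => h φ - (inner ℝ (x θ) (u φ) : ℝ)) 0 θ := by
      rw [hasDerivAt_iff_isLittleO, Asymptotics.isLittleO_iff]
      intro c hc
      filter_upwards [Metric.ball_mem_nhds θ hc] with φ hφ
      have hφ' : |φ - θ| < c := by rwa [Metric.mem_ball, Real.dist_eq] at hφ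
      have hl : (0:ℝ) ≤ h φ - inner ℝ (x θ) (u φ) - (h θ - inner ℝ (x θ) (u θ)) := by
        have h1 := hub φ (x θ) (hxK θ)
        have h2 := hxval θ
        linarith
      have hup : h φ - (inner ℝ (x θ) (u φ) : ℝ) - (h θ - inner ℝ (x θ) (u θ)) ≤ |φ - θ| * |φ - θ| := by
        have e1 : h φ = (inner ℝ (x φ) (u φ) : ℝ) := (hxval φ).symm
        have e2 : (inner ℝ (x φ) (u θ) : ℝ) ≤ h θ := hub θ (x φ) (hxK φ)
        have e3 : (inner ℝ (x φ - x θ) (u φ - u θ) : ℝ) ≤ ‖x φ - x θ‖ * ‖u φ - u θ‖ :=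
          real_inner_le_norm _ _
        have e4 : ‖x φ - x θ‖ ≤ |φ - θ| := (hchord φ θ).trans (norm_u_sub_le φ θ)
        have e5 : ‖u φ - u θ‖ ≤ |φ - θ| := norm_u_sub_le φ θ
        have e6 : (inner ℝ (x φ - x θ) (u φ - u θ) : ℝ) ≤ |φ - θ| * |φ - θ| :=
          e3.trans (mul_le_mul e4 e5 (norm_nonneg _) (abs_nonneg _))
        have expand : (inner ℝ (x φ - x θ) (u φ - u θ) : ℝ) =
            inner ℝ (x φ) (u φ) - inner ℝ (x φ) (u θ) - inner ℝ (x θ) (u φ) + inner ℝ (x θ) (u θ) := by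
          rw [inner_sub_left, inner_sub_right, inner_sub_right]
          ring
        rw [expand] at e6
        linarith
      have : |h φ - (inner ℝ (x θ) (u φ) : ℝ) - (h θ - inner ℝ (x θ) (u θ))| ≤ |φ - θ| * |φ - θ| := by
        rw [abs_of_nonneg hl]; exact hup
      simp only [smul_zero, sub_zero, Real.norm_eq_abs]
      calc |h φ - (inner ℝ (x θ) (u φ) : ℝ) - (h θ - inner ℝ (x θ) (u θ))|
          ≤ |φ - θ| * |φ - θ| := this
        _ ≤ c * |φ - θ| := mul_le_mul_of_nonneg_right hφ'.le (abs_nonneg _)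
    have := hsmall.add hg
    rw [zero_add] at this
    have e : ((fun φ => h φ - (inner ℝ (x θ) (u φ) : ℝ)) + fun φ => (inner ℝ (x θ) (u φ) : ℝ)) = h := by
      ext φ; simp
    rwa [e] at this
  -- γ θ = x θ
  have hgamma : ∀ θ : ℝ, h θ • u θ + deriv h θ • u' θ = x θ := by
    intro θ
    rw [(hderiv θ).deriv, ← hxval θ]
    have hpyth := Real.sin_sq_add_cos_sq θ
    rw [inner_u (x θ) θ, inner_u' (x θ) θ]
    ext i
    fin_cases i <;>
      · simp only [PiLp.add_apply, PiLp.smul_apply, smul_eq_mul, u, u',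
          Matrix.cons_val_zero, Matrix.cons_val_one, Matrix.head_cons, Fin.isValue, Fin.mk_zero, Fin.mk_one]
        first
        | linear_combination (x θ 0) * hpyth
        | linear_combination (x θ 1) * hpyth
  intro θ₁ θ₂
  rw [hgamma θ₁, hgamma θ₂]
  exact (hchord θ₁ θ₂).trans (norm_u_sub_le θ₁ θ₂)
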